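/- Let A be a real n×n matrix (n ≥ 1) having 1 as an eigenvalue, i.e., (t − 1) divides the characteristic polynomial of A over ℝ. Then there exists a real n×n matrix B all of whose row sums and column sums equal 1 such that B has the same characteristic polynomial as A. -/

import Mathlib

open Polynomial

namespace Stmt14Aux

open Matrix Finset

variable {n : ℕ}

/-- Columns: `e_j - e_{j+1}` for `j < n-1`, and the all-ones vector as last column. -/
noncomputable def Pm (n : ℕ) : Matrix (Fin n) (Fin n) ℝ :=
  Matrix.of fun i j =>
    if (j : ℕ) = n - 1 then 1
    else if (i : ℕ) = (j : ℕ) then 1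
    else if (i : ℕ) = (j : ℕ) + 1 then -1 else 0

/-- The inverse of `Pm`. -/
noncomputable def Qm (n : ℕ) : Matrix (Fin n) (Fin n) ℝ :=
  Matrix.of fun i j =>
    if (i : ℕ) = n - 1 then (n : ℝ)⁻¹
    else (if (j : ℕ) ≤ (i : ℕ) then 1 else 0) - ((i : ℕ) + 1) * (n : ℝ)⁻¹

lemma sum_indicator_le (c : ℕ) (hc : c < n) :
    ∑ k : Fin n, (if (k : ℕ) ≤ c then (1 : ℝ) else 0) = (c + 1 : ℕ) := by
  rw [Fin.sum_univ_eq_sum_range (fun k => if k ≤ c then (1 : ℝ) else 0)]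
  rw [Finset.sum_boole]
  have : (Finset.range n).filter (fun k => k ≤ c) = Finset.range (c + 1) := by
    ext k; simp [Nat.lt_succ_iff]; omega
  rw [this]; simp

lemma sum_indicator_eq (c : ℕ) (hc : c < n) :
    ∑ k : Fin n, (if (k : ℕ) = c then (1 : ℝ) else 0) = 1 := by
  have h : ∀ k : Fin n, ((k : ℕ) = c) = (k = ⟨c, hc⟩) := fun k => by
    simp [Fin.ext_iff]
  simp_rw [h]
  simp

lemma Qm_row_sum (hn : 0 < n) (i : Fin n) :
    ∑ j, Qm n i j = if (i : ℕ) = n - 1 then 1 else 0 := by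
  have hn' : (n : ℝ) ≠ 0 := Nat.cast_ne_zero.mpr hn.ne'
  by_cases hi : (i : ℕ) = n - 1
  · simp only [Qm, Matrix.of_apply, hi, if_pos rfl, if_true]
    rw [Finset.sum_const, Finset.card_univ, Fintype.card_fin]
    rw [nsmul_eq_mul]
    field_simp
  · simp only [Qm, Matrix.of_apply, hi, if_false]
    rw [Finset.sum_sub_distrib, Finset.sum_const, Finset.card_univ, Fintype.card_fin]
    rw [nsmul_eq_mul]
    rw [sum_indicator_le (i : ℕ) i.isLt]
    push_cast
    field_simp
    simp

lemma Pm_col_sum (hn : 0 < n) (j : Fin n) :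
    ∑ i, Pm n i j = if (j : ℕ) = n - 1 then (n : ℝ) else 0 := by
  by_cases hj : (j : ℕ) = n - 1
  · simp only [Pm, Matrix.of_apply, hj, if_pos rfl, if_true]
    rw [Finset.sum_const, Finset.card_univ, Fintype.card_fin]
    simp
  · have hj1 : (j : ℕ) + 1 < n := by omega
    simp only [Pm, Matrix.of_apply, hj, if_false]
    have key : ∀ i : Fin n,
        (if (i : ℕ) = (j : ℕ) then (1 : ℝ) else if (i : ℕ) = (j : ℕ) + 1 then -1 else 0)
        = (if (i : ℕ) = (j : ℕ) then (1 : ℝ) else 0)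
          - (if (i : ℕ) = (j : ℕ) + 1 then (1 : ℝ) else 0) := by
      intro i
      by_cases h1 : (i : ℕ) = (j : ℕ)
      · have : ¬ ((i : ℕ) = (j : ℕ) + 1) := by omega
        simp [h1, this]
      · by_cases h2 : (i : ℕ) = (j : ℕ) + 1 <;> simp [h1, h2]
    simp_rw [key]
    rw [Finset.sum_sub_distrib, sum_indicator_eq (j : ℕ) j.isLt,
      sum_indicator_eq ((j : ℕ) + 1) hj1]
    simp

lemma QP (hn : 0 < n) : Qm n * Pm n = 1 := by
  have hn' : (n : ℝ) ≠ 0 := Nat.cast_ne_zero.mpr hn.ne'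
  ext i j
  rw [Matrix.mul_apply]
  by_cases hj : (j : ℕ) = n - 1
  · have hP : ∀ k : Fin n, Pm n k j = 1 := fun k => by simp [Pm, hj]
    simp_rw [hP, mul_one]
    rw [Qm_row_sum hn i]
    have hij : (i = j) ↔ ((i : ℕ) = n - 1) := by
      rw [Fin.ext_iff, hj]
    by_cases hi : (i : ℕ) = n - 1
    · rw [if_pos hi, Matrix.one_apply, if_pos (hij.mpr hi)]
    · rw [if_neg hi, Matrix.one_apply, if_neg (fun h => hi (hij.mp h))]
  · have hj1 : (j : ℕ) + 1 < n := by omega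
    set j' : Fin n := ⟨(j : ℕ) + 1, hj1⟩ with hj'
    have hP : ∀ k : Fin n, Pm n k j =
        (if k = j then (1 : ℝ) else 0) - (if k = j' then (1 : ℝ) else 0) := by
      intro k
      simp only [Pm, Matrix.of_apply, hj, if_false]
      have e1 : ((k : ℕ) = (j : ℕ)) ↔ (k = j) := by simp [Fin.ext_iff]
      have e2 : ((k : ℕ) = (j : ℕ) + 1) ↔ (k = j') := by simp [Fin.ext_iff, hj']
      by_cases h1 : k = j
      · have : ¬ (k = j') := by
          rw [Fin.ext_iff] at h1 ⊢; simp [hj'] at *; omega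
        simp [h1, this, ← e1, ← e2, Fin.ext_iff]
        simp [hj']
      · by_cases h2 : k = j'
        · have hk : ¬ ((k : ℕ) = (j : ℕ)) := fun h => h1 (e1.mp h)
          have hjj : ¬ (j' = j) := by rw [Fin.ext_iff]; simp [hj']
          simp [hk, h2, hjj]
          simp [hj']
        · have n1 : ¬ ((k : ℕ) = (j : ℕ)) := fun h => h1 (e1.mp h)
          have n2 : ¬ ((k : ℕ) = (j : ℕ) + 1) := fun h => h2 (e2.mp h)
          simp [n1, n2, h1, h2]
    simp_rw [hP, mul_sub, mul_ite, mul_one, mul_zero, Finset.sum_sub_distrib,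
      Finset.sum_ite_eq', Finset.mem_univ, if_true]
    by_cases hi : (i : ℕ) = n - 1
    · have hij : ¬ (i = j) := by rw [Fin.ext_iff]; omega
      simp [Qm, hi, Matrix.one_apply, hij]
    · simp only [Qm, Matrix.of_apply, hi, if_false, hj']
      rw [Matrix.one_apply]
      by_cases hij : i = j
      · have h1 : (j : ℕ) ≤ (i : ℕ) := by rw [hij]
        have h2 : ¬ ((j : ℕ) + 1 ≤ (i : ℕ)) := by rw [hij]; omega
        simp [h1, h2, hij]
      · have hne : (i : ℕ) ≠ (j : ℕ) := fun h => hij (Fin.ext h)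
        by_cases h1 : (j : ℕ) ≤ (i : ℕ)
        · have h2 : (j : ℕ) + 1 ≤ (i : ℕ) := by omega
          simp [h1, h2, hij]
        · have h2 : ¬ ((j : ℕ) + 1 ≤ (i : ℕ)) := by omega
          simp [h1, h2, hij]

lemma PQ (hn : 0 < n) : Pm n * Qm n = 1 :=
  mul_eq_one_comm.mp (QP hn)

lemma charpoly_conj (P Q D : Matrix (Fin n) (Fin n) ℝ) (hPQ : P * Q = 1) :
    (P * D * Q).charpoly = D.charpoly := by
  classical
  set f : Matrix (Fin n) (Fin n) ℝ →+* Matrix (Fin n) (Fin n) ℝ[X] := (C : ℝ →+* ℝ[X]).mapMatrix with hf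
  have hcomm : ∀ M : Matrix (Fin n) (Fin n) ℝ[X],
      Matrix.scalar (Fin n) (X : ℝ[X]) * M = M * Matrix.scalar (Fin n) X := fun M =>
    (Matrix.scalar_commute (X : ℝ[X]) (fun r' => Commute.all _ _) M).eq
  have hfPQ : f P * f Q = 1 := by rw [← map_mul f, hPQ, map_one f]
  have hc : Matrix.charmatrix (P * D * Q) = f P * Matrix.charmatrix D * f Q := by
    unfold Matrix.charmatrix
    rw [← hf]
    rw [_root_.map_mul, _root_.map_mul]
    rw [mul_sub, sub_mul]
    congr 1
    rw [← hcomm (f P), mul_assoc, hfPQ, mul_one]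
  rw [Matrix.charpoly, Matrix.charpoly, hc, Matrix.det_mul, Matrix.det_mul]
  rw [mul_comm (Matrix.det (f P))]
  rw [mul_assoc, ← Matrix.det_mul, hfPQ, Matrix.det_one, mul_one]

lemma Pm_last_col (hn : 0 < n) (i : Fin n) : Pm n i ⟨n - 1, by omega⟩ = 1 := by
  simp [Pm]

lemma Qm_last_row (hn : 0 < n) (j : Fin n) : Qm n ⟨n - 1, by omega⟩ j = (n : ℝ)⁻¹ := by
  simp [Qm]

end Stmt14Aux

open Stmt14Aux Matrix in
/-- Let `A` be a real `n × n` matrix (`n ≥ 1`) having `1` as an eigenvalue, i.e.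
`(t - 1)` divides its characteristic polynomial.  Then there exists a real `n × n`
matrix `B` with all row sums and column sums equal to `1` having the same
characteristic polynomial as `A`. -/
theorem stmt14 (n : ℕ) (hn : 0 < n) (A : Matrix (Fin n) (Fin n) ℝ)
    (h1 : (X - C 1) ∣ A.charpoly) :
    ∃ B : Matrix (Fin n) (Fin n) ℝ,
      (∀ i, ∑ j, B i j = 1) ∧ (∀ j, ∑ i, B i j = 1) ∧ B.charpoly = A.charpoly := by
  classical
  obtain ⟨q, hq⟩ := h1
  have hn' : (n : ℝ) ≠ 0 := Nat.cast_ne_zero.mpr hn.ne'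
  have hpm : A.charpoly.Monic := A.charpoly_monic
  have hmX : (X - C (1 : ℝ)).Monic := monic_X_sub_C 1
  have hqm : q.Monic := by
    have h := hpm
    rw [hq] at h
    exact Polynomial.Monic.of_mul_monic_left hmX h
  have hq0 : q ≠ 0 := hqm.ne_zero
  have hdegp : A.charpoly.natDegree = n := by
    rw [A.charpoly_natDegree_eq_dim, Fintype.card_fin]
  have hdegq : q.natDegree = n - 1 := by
    rw [hq, natDegree_mul hmX.ne_zero hq0, natDegree_X_sub_C] at hdegp
    omega
  set pb := AdjoinRoot.powerBasis hq0 with hpb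
  have hdim : pb.dim = n - 1 := hdegq
  set M0 := Algebra.leftMulMatrix pb.basis pb.gen with hM0def
  have hM0 : M0.charpoly = q := by
    rw [hM0def, _root_.charpoly_leftMulMatrix, hpb,
      AdjoinRoot.minpoly_powerBasis_gen_of_monic hqm]
  have hmn : pb.dim + 1 = n := by omega
  set e : Fin pb.dim ⊕ Fin 1 ≃ Fin n := finSumFinEquiv.trans (finCongr hmn) with he
  set D0 : Matrix (Fin pb.dim ⊕ Fin 1) (Fin pb.dim ⊕ Fin 1) ℝ :=
    Matrix.fromBlocks M0 0 0 (1 : Matrix (Fin 1) (Fin 1) ℝ) with hD0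
  set D : Matrix (Fin n) (Fin n) ℝ := Matrix.reindex e e D0 with hDdef
  have hD : D.charpoly = A.charpoly := by
    have h1x : (1 : Matrix (Fin 1) (Fin 1) ℝ).charpoly = X - C 1 := by
      rw [Matrix.charpoly, Matrix.det_fin_one, Matrix.charmatrix_apply_eq]
      simp
    rw [hDdef, Matrix.charpoly_reindex, hD0, Matrix.charpoly_fromBlocks_zero₁₂,
      hM0, h1x, hq, mul_comm]
  set last : Fin n := ⟨n - 1, by omega⟩ with hlastdef
  have helast : e (Sum.inr 0) = last := by
    rw [Fin.ext_iff]
    simp [he, hlastdef]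
    omega
  have helast' : e.symm last = Sum.inr 0 := by
    rw [← helast, Equiv.symm_apply_apply]
  have hDentry : ∀ k l, D k l = D0 (e.symm k) (e.symm l) := by
    intro k l
    rw [hDdef, Matrix.reindex_apply, Matrix.submatrix_apply]
  have hDcol : ∀ k : Fin n, D k last = if k = last then 1 else 0 := by
    intro k
    rw [hDentry, helast']
    rcases hk : e.symm k with a | b
    · have hkl : k ≠ last := by
        intro h
        rw [h, helast'] at hk
        cases hk
      simp [hD0, hkl]
    · have hb : b = 0 := Subsingleton.elim _ _
      subst hb
      have hkl : k = last := by
        have := congrArg e hk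
        rwa [Equiv.apply_symm_apply, helast] at this
      simp [hD0, hkl, Matrix.one_apply]
  have hDrow : ∀ l : Fin n, D last l = if l = last then 1 else 0 := by
    intro l
    rw [hDentry, helast']
    rcases hl : e.symm l with a | b
    · have hll : l ≠ last := by
        intro h
        rw [h, helast'] at hl
        cases hl
      simp [hD0, hll]
    · have hb : b = 0 := Subsingleton.elim _ _
      subst hb
      have hll : l = last := by
        have := congrArg e hl
        rwa [Equiv.apply_symm_apply, helast] at this
      simp [hD0, hll, Matrix.one_apply]
  have hcond : ∀ k : Fin n, ((k : ℕ) = n - 1) ↔ (k = last) := by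
    intro k
    rw [Fin.ext_iff]
  refine ⟨Pm n * D * Qm n, ?_, ?_, ?_⟩
  · intro i
    have h1 : ∀ j, (Pm n * D * Qm n) i j = ∑ k, (Pm n * D) i k * Qm n k j := by
      intro j; rw [Matrix.mul_apply]
    simp_rw [h1]
    rw [Finset.sum_comm]
    have h2 : ∀ k, ∑ j, (Pm n * D) i k * Qm n k j = (Pm n * D) i k * ∑ j, Qm n k j := by
      intro k; rw [Finset.mul_sum]
    simp_rw [h2, Qm_row_sum hn]
    have h3 : ∀ k : Fin n,
        (Pm n * D) i k * (if (k : ℕ) = n - 1 then (1:ℝ) else 0)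
          = if k = last then (Pm n * D) i k else 0 := by
      intro k
      by_cases h : (k : ℕ) = n - 1
      · rw [if_pos h, if_pos ((hcond k).mp h), mul_one]
      · rw [if_neg h, if_neg (fun hh => h ((hcond k).mpr hh)), mul_zero]
    simp_rw [h3]
    rw [Finset.sum_ite_eq' Finset.univ last, if_pos (Finset.mem_univ _)]
    rw [Matrix.mul_apply]
    simp_rw [hDcol]
    have h4 : ∀ k : Fin n, Pm n i k * (if k = last then (1:ℝ) else 0)
        = if k = last then Pm n i k else 0 := by
      intro k; by_cases h : k = last <;> simp [h]
    simp_rw [h4]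
    rw [Finset.sum_ite_eq' Finset.univ last, if_pos (Finset.mem_univ _)]
    exact Pm_last_col hn i
  · intro j
    have hassoc : Pm n * D * Qm n = Pm n * (D * Qm n) := by rw [mul_assoc]
    rw [hassoc]
    have h1 : ∀ i, (Pm n * (D * Qm n)) i j = ∑ k, Pm n i k * (D * Qm n) k j := by
      intro i; rw [Matrix.mul_apply]
    simp_rw [h1]
    rw [Finset.sum_comm]
    have h2 : ∀ k, ∑ i, Pm n i k * (D * Qm n) k j
        = (∑ i, Pm n i k) * (D * Qm n) k j := by
      intro k; rw [Finset.sum_mul]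
    simp_rw [h2, Pm_col_sum hn]
    have h3 : ∀ k : Fin n,
        (if (k : ℕ) = n - 1 then (n : ℝ) else 0) * (D * Qm n) k j
          = if k = last then (n : ℝ) * (D * Qm n) k j else 0 := by
      intro k
      by_cases h : (k : ℕ) = n - 1
      · rw [if_pos h, if_pos ((hcond k).mp h)]
      · rw [if_neg h, if_neg (fun hh => h ((hcond k).mpr hh)), zero_mul]
    simp_rw [h3]
    rw [Finset.sum_ite_eq' Finset.univ last, if_pos (Finset.mem_univ _)]
    rw [Matrix.mul_apply]
    simp_rw [hDrow]
    have h4 : ∀ l : Fin n, (if l = last then (1:ℝ) else 0) * Qm n l j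
        = if l = last then Qm n l j else 0 := by
      intro l; by_cases h : l = last <;> simp [h]
    simp_rw [h4]
    rw [Finset.sum_ite_eq' Finset.univ last, if_pos (Finset.mem_univ _)]
    rw [hlastdef, Qm_last_row hn]
    field_simp
  · rw [charpoly_conj _ _ _ (PQ hn), hD]
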